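/- arXiv:2412.09552 — 2 statements merged into one kernel-verified Lean document; each statement's English description precedes it below -/
import Mathlib

section
/- Let π : H → B be a partial representation of a Hopf algebra H in a unital algebra B. Then the map π̄ : H^opcop → B^op defined by π̄(h) = π(h) is a partial representation of the Hopf algebra H^opcop in the opposite algebra B^op. -/
open TensorProduct

/-- Sweedler-style sum `h ↦ Σ f(h₍₁₎) * g(h₍₂₎)` for linear maps `f g : H →ₗ[k] B`,
with respect to a bilinear multiplication `mul` on `B`. -/
noncomputable def sweedler {k H B : Type*} [CommRing k] [Ring H] [HopfAlgebra k H]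
    [AddCommGroup B] [Module k B]
    (mul : B →ₗ[k] B →ₗ[k] B) (f g : H →ₗ[k] B) : H →ₗ[k] B :=
  TensorProduct.lift ((mul ∘ₗ f).compl₂ g) ∘ₗ Coalgebra.comul

/-- A partial representation of a Hopf algebra `H` in a unital algebra `B`:
(PR1) `π(1) = 1`; (PR2) `π(h)π(k₍₁₎)π(S(k₍₂₎)) = π(hk₍₁₎)π(S(k₍₂₎))`;
(PR3) `π(h₍₁₎)π(S(h₍₂₎))π(g) = π(h₍₁₎)π(S(h₍₂₎)g)`. -/
structure IsPartialRep (k : Type*) {H B : Type*} [CommRing k] [Ring H] [HopfAlgebra k H]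
    [Ring B] [Algebra k B] (π : H →ₗ[k] B) : Prop where
  pr1 : π 1 = 1
  pr2 : ∀ h kk : H,
    sweedler (LinearMap.mul k B) ((LinearMap.mulLeft k (π h)) ∘ₗ π)
      (π ∘ₗ (HopfAlgebra.antipode k : H →ₗ[k] H)) kk =
    sweedler (LinearMap.mul k B) (π ∘ₗ LinearMap.mulLeft k h)
      (π ∘ₗ (HopfAlgebra.antipode k : H →ₗ[k] H)) kk
  pr3 : ∀ h g : H,
    sweedler (LinearMap.mul k B) π (π ∘ₗ (HopfAlgebra.antipode k : H →ₗ[k] H)) h * π g =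
    sweedler (LinearMap.mul k B) π
      (π ∘ₗ LinearMap.mulRight k g ∘ₗ (HopfAlgebra.antipode k : H →ₗ[k] H)) h

/-- Coopposite Sweedler sum `h ↦ Σ f(h₍₂₎) * g(h₍₁₎)` (i.e. the Sweedler sum with respect
to the coopposite comultiplication `Δᶜᵒᵖ = τ ∘ Δ`). -/
noncomputable def sweedlerCoop {k H B : Type*} [CommRing k] [Ring H] [HopfAlgebra k H]
    [AddCommGroup B] [Module k B]
    (mul : B →ₗ[k] B →ₗ[k] B) (f g : H →ₗ[k] B) : H →ₗ[k] B :=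
  TensorProduct.lift ((mul ∘ₗ f).compl₂ g) ∘ₗ
    (TensorProduct.comm k H H).toLinearMap ∘ₗ Coalgebra.comul

namespace PartialRepAux

open Coalgebra HopfAlgebra LinearMap

variable {k H B : Type*} [CommRing k] [Ring H] [HopfAlgebra k H] [Ring B] [Algebra k B]

/-- `mk2 F G` is the linear map `x ⊗ y ↦ F x * G y`. -/
noncomputable def mk2 {M N : Type*} [AddCommGroup M] [Module k M] [AddCommGroup N]
    [Module k N] (F : M →ₗ[k] B) (G : N →ₗ[k] B) : M ⊗[k] N →ₗ[k] B :=
  TensorProduct.lift ((LinearMap.mul k B ∘ₗ F).compl₂ G)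

variable {M N P Q : Type*} [AddCommGroup M] [Module k M] [AddCommGroup N] [Module k N]
  [AddCommGroup P] [Module k P] [AddCommGroup Q] [Module k Q]

@[simp] lemma mk2_tmul (F : M →ₗ[k] B) (G : N →ₗ[k] B) (x : M) (y : N) :
    mk2 F G (x ⊗ₜ y) = F x * G y := rfl

lemma sweedler_eq (f g : H →ₗ[k] B) (x : H) :
    sweedler (LinearMap.mul k B) f g x = mk2 f g (Coalgebra.comul x) := rfl

lemma mk2_comp_lTensor (F : M →ₗ[k] B) (G : P →ₗ[k] B) (t : N →ₗ[k] P) :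
    mk2 F (G ∘ₗ t) = mk2 F G ∘ₗ LinearMap.lTensor M t := by
  apply TensorProduct.ext'; intro x y; simp [mk2]

lemma mk2_comp_rTensor (F : P →ₗ[k] B) (G : N →ₗ[k] B) (t : M →ₗ[k] P) :
    mk2 (F ∘ₗ t) G = mk2 F G ∘ₗ LinearMap.rTensor N t := by
  apply TensorProduct.ext'; intro x y; simp [mk2]

lemma mk2_mulLeft (c : B) (F : M →ₗ[k] B) (G : N →ₗ[k] B) :
    mk2 (LinearMap.mulLeft k c ∘ₗ F) G = LinearMap.mulLeft k c ∘ₗ mk2 F G := by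
  apply TensorProduct.ext'; intro x y; simp [mk2, mul_assoc]

lemma mk2_mulRight (c : B) (F : M →ₗ[k] B) (G : N →ₗ[k] B) :
    mk2 F (LinearMap.mulRight k c ∘ₗ G) = LinearMap.mulRight k c ∘ₗ mk2 F G := by
  apply TensorProduct.ext'; intro x y; simp [mk2, mul_assoc]

lemma tensor_swap (f : M →ₗ[k] P) (g : N →ₗ[k] Q) :
    LinearMap.lTensor P g ∘ₗ LinearMap.rTensor N f =
      LinearMap.rTensor Q f ∘ₗ LinearMap.lTensor M g := by
  apply TensorProduct.ext'; intro x y; simp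

lemma mul'_comp_rTensor_mulLeft (h : H) :
    LinearMap.mul' k H ∘ₗ LinearMap.rTensor H (LinearMap.mulLeft k h) =
      LinearMap.mulLeft k h ∘ₗ LinearMap.mul' k H := by
  apply TensorProduct.ext'; intro x y; simp [LinearMap.mul'_apply, mul_assoc]

lemma mul'_comp_lTensor_mulRight (g : H) :
    LinearMap.mul' k H ∘ₗ LinearMap.lTensor H (LinearMap.mulRight k g) =
      LinearMap.mulRight k g ∘ₗ LinearMap.mul' k H := by
  apply TensorProduct.ext'; intro x y; simp [LinearMap.mul'_apply, mul_assoc]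

section PiLemmas

variable (π : H →ₗ[k] B)

/-- `πS = π ∘ S`. -/
noncomputable def piS : H →ₗ[k] B := π ∘ₗ (HopfAlgebra.antipode k : H →ₗ[k] H)

/-- `E h = Σ π(h₁) π(S h₂)`. -/
noncomputable def Emap : H →ₗ[k] B := mk2 π (piS π) ∘ₗ Coalgebra.comul

/-- `innerMap π f (u ⊗ a) = Σ π(f(u) a₁) π(S a₂)`. -/
noncomputable def innerMap (f : H →ₗ[k] H) : H ⊗[k] H →ₗ[k] B :=
  mk2 (π ∘ₗ LinearMap.mul' k H) (piS π) ∘ₗ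
    (TensorProduct.assoc k H H H).symm.toLinearMap ∘ₗ
    LinearMap.lTensor H Coalgebra.comul ∘ₗ LinearMap.rTensor H f

lemma innerMap_tmul (f : H →ₗ[k] H) (u a : H) :
    innerMap π f (u ⊗ₜ a) =
      mk2 (π ∘ₗ LinearMap.mulLeft k (f u)) (piS π) (Coalgebra.comul a) := by
  have key : mk2 (π ∘ₗ LinearMap.mul' k H) (piS π) ∘ₗ
        (TensorProduct.assoc k H H H).symm.toLinearMap ∘ₗ
        TensorProduct.mk k H (H ⊗[k] H) (f u) =
      mk2 (π ∘ₗ LinearMap.mulLeft k (f u)) (piS π) := by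
    apply TensorProduct.ext'; intro a b
    simp [TensorProduct.assoc_symm_tmul, LinearMap.mul'_apply]
  have key2 := LinearMap.congr_fun key (Coalgebra.comul a)
  simp only [LinearMap.comp_apply, LinearEquiv.coe_coe, TensorProduct.mk_apply] at key2
  simpa [innerMap] using key2

/-- `kMap π g (u ⊗ v) = Σ π(u₁) π(S(u₂) (v g))`. -/
noncomputable def kMap (g : H) : H ⊗[k] H →ₗ[k] B :=
  mk2 π (π ∘ₗ LinearMap.mul' k H ∘ₗ
      LinearMap.rTensor H (HopfAlgebra.antipode k : H →ₗ[k] H)) ∘ₗ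
    (TensorProduct.assoc k H H H).toLinearMap ∘ₗ
    LinearMap.rTensor H Coalgebra.comul ∘ₗ LinearMap.lTensor H (LinearMap.mulRight k g)

lemma kMap_tmul (g : H) (u v : H) :
    kMap π g (u ⊗ₜ v) =
      mk2 π (π ∘ₗ LinearMap.mulRight k (v * g) ∘ₗ (HopfAlgebra.antipode k : H →ₗ[k] H))
        (Coalgebra.comul u) := by
  have key : mk2 π (π ∘ₗ LinearMap.mul' k H ∘ₗ
          LinearMap.rTensor H (HopfAlgebra.antipode k : H →ₗ[k] H)) ∘ₗ
        (TensorProduct.assoc k H H H).toLinearMap ∘ₗ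
        (TensorProduct.mk k (H ⊗[k] H) H).flip (v * g) =
      mk2 π (π ∘ₗ LinearMap.mulRight k (v * g) ∘ₗ
        (HopfAlgebra.antipode k : H →ₗ[k] H)) := by
    apply TensorProduct.ext'; intro a b
    simp [TensorProduct.assoc_tmul, LinearMap.mul'_apply, mul_assoc]
  have key2 := LinearMap.congr_fun key (Coalgebra.comul u)
  simp only [LinearMap.comp_apply, LinearEquiv.coe_coe, LinearMap.flip_apply,
    TensorProduct.mk_apply] at key2
  simpa [kMap] using key2

lemma assoc_conj (f : H →ₗ[k] H) :
    mk2 (π ∘ₗ LinearMap.mul' k H) (piS π) ∘ₗ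
      (TensorProduct.assoc k H H H).symm.toLinearMap ∘ₗ
      LinearMap.rTensor (H ⊗[k] H) f ∘ₗ (TensorProduct.assoc k H H H).toLinearMap =
    mk2 (π ∘ₗ LinearMap.mul' k H ∘ₗ LinearMap.rTensor H f) (piS π) := by
  apply TensorProduct.ext_threefold; intro x y z
  simp [TensorProduct.assoc_tmul, TensorProduct.assoc_symm_tmul, LinearMap.mul'_apply]

lemma assoc_conj' (t : H →ₗ[k] H) :
    mk2 π (π ∘ₗ LinearMap.mul' k H ∘ₗ
        LinearMap.rTensor H (HopfAlgebra.antipode k : H →ₗ[k] H)) ∘ₗ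
      (TensorProduct.assoc k H H H).toLinearMap ∘ₗ LinearMap.lTensor (H ⊗[k] H) t =
    mk2 π (π ∘ₗ LinearMap.mul' k H ∘ₗ
        LinearMap.rTensor H (HopfAlgebra.antipode k : H →ₗ[k] H) ∘ₗ
        LinearMap.lTensor H t) ∘ₗ
      (TensorProduct.assoc k H H H).toLinearMap := by
  apply TensorProduct.ext_threefold; intro x y z
  simp [TensorProduct.assoc_tmul, LinearMap.mul'_apply]

/-- Collapse: `Σ π(h S(u₁) u₂) π(S u₃) = π(h) π(S u)`. -/
lemma collapse (h : H) (u : H) :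
    innerMap π (LinearMap.mulLeft k h ∘ₗ (HopfAlgebra.antipode k : H →ₗ[k] H))
      (Coalgebra.comul u) = π h * piS π u := by
  set f : H →ₗ[k] H :=
    LinearMap.mulLeft k h ∘ₗ (HopfAlgebra.antipode k : H →ₗ[k] H) with hf
  have e1 : LinearMap.lTensor H (Coalgebra.comul (R := k) (A := H))
        (LinearMap.rTensor H f (Coalgebra.comul u)) =
      LinearMap.rTensor (H ⊗[k] H) f
        ((TensorProduct.assoc k H H H)
          (LinearMap.rTensor H Coalgebra.comul (Coalgebra.comul u))) := by
    have hsw := LinearMap.congr_fun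
      (tensor_swap (k := k) f (Coalgebra.comul (R := k) (A := H))) (Coalgebra.comul u)
    simp only [LinearMap.comp_apply] at hsw
    rw [hsw, ← Coalgebra.coassoc_apply]
  have e2 := LinearMap.congr_fun (assoc_conj π f)
      (LinearMap.rTensor H (Coalgebra.comul (R := k) (A := H)) (Coalgebra.comul u))
  simp only [LinearMap.comp_apply, LinearEquiv.coe_coe] at e2
  have e3 : innerMap π f (Coalgebra.comul u) =
      mk2 (π ∘ₗ LinearMap.mul' k H ∘ₗ LinearMap.rTensor H f) (piS π)
        (LinearMap.rTensor H Coalgebra.comul (Coalgebra.comul u)) := by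
    simp only [innerMap, LinearMap.comp_apply, LinearEquiv.coe_coe]
    rw [e1]; exact e2
  have e4 := LinearMap.congr_fun
      (mk2_comp_rTensor (π ∘ₗ LinearMap.mul' k H ∘ₗ LinearMap.rTensor H f) (piS π)
        Coalgebra.comul) (Coalgebra.comul u)
  simp only [LinearMap.comp_apply] at e4
  have hfactor : (π ∘ₗ LinearMap.mul' k H ∘ₗ LinearMap.rTensor H f) ∘ₗ
        Coalgebra.comul =
      ((π ∘ₗ LinearMap.mulLeft k h) ∘ₗ Algebra.linearMap k H) ∘ₗ Coalgebra.counit := by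
    apply LinearMap.ext; intro a
    have s1 : LinearMap.rTensor H f (Coalgebra.comul a) =
        LinearMap.rTensor H (LinearMap.mulLeft k h)
          (LinearMap.rTensor H (HopfAlgebra.antipode k : H →ₗ[k] H)
            (Coalgebra.comul a)) := by
      rw [hf, LinearMap.rTensor_comp, LinearMap.comp_apply]
    have s2 := LinearMap.congr_fun (mul'_comp_rTensor_mulLeft (k := k) h)
        (LinearMap.rTensor H (HopfAlgebra.antipode k : H →ₗ[k] H) (Coalgebra.comul a))
    simp only [LinearMap.comp_apply] at s2
    have s3 := HopfAlgebra.mul_antipode_rTensor_comul_apply (R := k) (a := a)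
    simp only [LinearMap.comp_apply, s1, s2, s3]
    simp
  rw [e3, ← e4, hfactor]
  have e5 := LinearMap.congr_fun
      (mk2_comp_rTensor ((π ∘ₗ LinearMap.mulLeft k h) ∘ₗ Algebra.linearMap k H)
        (piS π) Coalgebra.counit) (Coalgebra.comul u)
  simp only [LinearMap.comp_apply] at e5
  rw [e5, Coalgebra.rTensor_counit_comul]
  simp [Algebra.linearMap_apply]

/-- Collapse for `kMap`: `Σ π(m₁) π(S(m₂) m₃ g) = π(m) π(g)`. -/
lemma kCollapse (g : H) (m : H) :
    kMap π g (Coalgebra.comul m) = π m * π g := by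
  set t : H →ₗ[k] H := LinearMap.mulRight k g with ht
  set X : H ⊗[k] H →ₗ[k] B := π ∘ₗ LinearMap.mul' k H ∘ₗ
    LinearMap.rTensor H (HopfAlgebra.antipode k : H →ₗ[k] H) with hX
  have e1 : LinearMap.rTensor H (Coalgebra.comul (R := k) (A := H))
        (LinearMap.lTensor H t (Coalgebra.comul m)) =
      LinearMap.lTensor (H ⊗[k] H) t
        (LinearMap.rTensor H Coalgebra.comul (Coalgebra.comul m)) := by
    have hsw := LinearMap.congr_fun
      (tensor_swap (k := k) (Coalgebra.comul (R := k) (A := H)) t)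
      (Coalgebra.comul m)
    simp only [LinearMap.comp_apply] at hsw
    exact hsw.symm
  have e2 := LinearMap.congr_fun (assoc_conj' π t)
      (LinearMap.rTensor H (Coalgebra.comul (R := k) (A := H)) (Coalgebra.comul m))
  simp only [LinearMap.comp_apply, LinearEquiv.coe_coe] at e2
  have e3 : kMap π g (Coalgebra.comul m) =
      mk2 π (π ∘ₗ LinearMap.mul' k H ∘ₗ
          LinearMap.rTensor H (HopfAlgebra.antipode k : H →ₗ[k] H) ∘ₗ
          LinearMap.lTensor H t)
        ((TensorProduct.assoc k H H H)
          (LinearMap.rTensor H Coalgebra.comul (Coalgebra.comul m))) := by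
    simp only [kMap, LinearMap.comp_apply, LinearEquiv.coe_coe]
    rw [e1]; exact e2
  rw [e3, Coalgebra.coassoc_apply]
  have e4 := LinearMap.congr_fun
      (mk2_comp_lTensor π (π ∘ₗ LinearMap.mul' k H ∘ₗ
          LinearMap.rTensor H (HopfAlgebra.antipode k : H →ₗ[k] H) ∘ₗ
          LinearMap.lTensor H t) Coalgebra.comul) (Coalgebra.comul m)
  simp only [LinearMap.comp_apply] at e4
  have hfactor : (π ∘ₗ LinearMap.mul' k H ∘ₗ
        LinearMap.rTensor H (HopfAlgebra.antipode k : H →ₗ[k] H) ∘ₗ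
        LinearMap.lTensor H t) ∘ₗ Coalgebra.comul =
      ((π ∘ₗ LinearMap.mulRight k g) ∘ₗ Algebra.linearMap k H) ∘ₗ
        Coalgebra.counit := by
    apply LinearMap.ext; intro a
    have s1 : LinearMap.rTensor H (HopfAlgebra.antipode k : H →ₗ[k] H)
          (LinearMap.lTensor H t (Coalgebra.comul a)) =
        LinearMap.lTensor H t
          (LinearMap.rTensor H (HopfAlgebra.antipode k : H →ₗ[k] H)
            (Coalgebra.comul a)) := by
      have := LinearMap.congr_fun
        (tensor_swap (k := k) (HopfAlgebra.antipode k : H →ₗ[k] H) t) (Coalgebra.comul a)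
      simp only [LinearMap.comp_apply] at this
      exact this.symm
    have s2 := LinearMap.congr_fun (mul'_comp_lTensor_mulRight (k := k) g)
        (LinearMap.rTensor H (HopfAlgebra.antipode k : H →ₗ[k] H) (Coalgebra.comul a))
    simp only [LinearMap.comp_apply] at s2
    have s3 := HopfAlgebra.mul_antipode_rTensor_comul_apply (R := k) (a := a)
    simp only [LinearMap.comp_apply, s1]
    simp only [ht, s2, s3]
    simp
  rw [← e4, hfactor]
  have e5 := LinearMap.congr_fun
      (mk2_comp_lTensor π ((π ∘ₗ LinearMap.mulRight k g) ∘ₗ Algebra.linearMap k H)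
        Coalgebra.counit) (Coalgebra.comul m)
  simp only [LinearMap.comp_apply] at e5
  rw [e5, Coalgebra.lTensor_counit_comul]
  simp [Algebra.linearMap_apply]

end PiLemmas

section Main

variable {π : H →ₗ[k] B}

/-- PR2 in `mk2` form. -/
lemma hp2 (hπ : IsPartialRep k π) (x m : H) :
    π x * mk2 π (piS π) (Coalgebra.comul m) =
      mk2 (π ∘ₗ LinearMap.mulLeft k x) (piS π) (Coalgebra.comul m) := by
  have h := hπ.pr2 x m
  rw [sweedler_eq, sweedler_eq,
    show (π ∘ₗ (HopfAlgebra.antipode k : H →ₗ[k] H)) = piS π from rfl, mk2_mulLeft] at h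
  simpa using h

/-- PR3 in `mk2` form. -/
lemma hp3 (hπ : IsPartialRep k π) (m g : H) :
    mk2 π (piS π) (Coalgebra.comul m) * π g =
      mk2 π (π ∘ₗ LinearMap.mulRight k g ∘ₗ (HopfAlgebra.antipode k : H →ₗ[k] H))
        (Coalgebra.comul m) := by
  have h := hπ.pr3 m g
  rw [sweedler_eq, sweedler_eq] at h
  exact h

/-- The merging lemma based on PR2. -/
lemma merge (hπ : IsPartialRep k π) (f : H →ₗ[k] H) (R : H →ₗ[k] B) :
    mk2 (π ∘ₗ f) (mk2 (Emap π) R) =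
      mk2 (innerMap π f) R ∘ₗ (TensorProduct.assoc k H H H).symm.toLinearMap := by
  apply TensorProduct.ext'; intro u z
  induction z using TensorProduct.induction_on with
  | zero =>
      rw [tmul_zero, map_zero, map_zero]
  | tmul a b =>
      simp only [mk2_tmul, LinearMap.comp_apply, LinearEquiv.coe_coe,
        TensorProduct.assoc_symm_tmul]
      rw [innerMap_tmul, ← mul_assoc]
      congr 1
      have hE : Emap π a = mk2 π (piS π) (Coalgebra.comul a) := rfl
      rw [hE]
      exact hp2 hπ (f u) a
  | add x y hx hy =>
      rw [tmul_add, map_add, map_add, hx, hy]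

/-- `C2 : Σ π(m₁) π(S m₂) π(m₃ g) = π(m) π(g)`. -/
lemma c2 (hπ : IsPartialRep k π) (g : H) (m : H) :
    mk2 (Emap π) (π ∘ₗ LinearMap.mulRight k g) (Coalgebra.comul m) = π m * π g := by
  have hmap : mk2 (Emap π) (π ∘ₗ LinearMap.mulRight k g) = kMap π g := by
    apply TensorProduct.ext'; intro u v
    rw [mk2_tmul, kMap_tmul]
    have hE : Emap π u = mk2 π (piS π) (Coalgebra.comul u) := rfl
    rw [hE, LinearMap.comp_apply, LinearMap.mulRight_apply]
    exact hp3 hπ u (v * g)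
  rw [hmap, kCollapse π g m]

/-- `C1 : Σ π(m₁) π(S m₂) π(m₃) = π(m)`. -/
lemma c1 (hπ : IsPartialRep k π) : mk2 (Emap π) π ∘ₗ Coalgebra.comul = π := by
  apply LinearMap.ext; intro m
  have h2 := c2 hπ 1 m
  rw [hπ.pr1, mul_one, LinearMap.mulRight_one, LinearMap.comp_id] at h2
  rw [LinearMap.comp_apply, h2]

/-- PR4: `Σ π(h S(kk₁)) π(kk₂) = π(h) Σ π(S kk₁) π(kk₂)`. -/
lemma pr4 (hπ : IsPartialRep k π) (h kk : H) :
    mk2 (π ∘ₗ LinearMap.mulLeft k h ∘ₗ (HopfAlgebra.antipode k : H →ₗ[k] H)) π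
      (Coalgebra.comul kk) = π h * mk2 (piS π) π (Coalgebra.comul kk) := by
  set f : H →ₗ[k] H :=
    LinearMap.mulLeft k h ∘ₗ (HopfAlgebra.antipode k : H →ₗ[k] H) with hf
  have step1 : mk2 (π ∘ₗ f) π (Coalgebra.comul kk) =
      mk2 (π ∘ₗ f) (mk2 (Emap π) π ∘ₗ Coalgebra.comul) (Coalgebra.comul kk) := by
    rw [c1 hπ]
  have step2 := LinearMap.congr_fun
      (mk2_comp_lTensor (π ∘ₗ f) (mk2 (Emap π) π) Coalgebra.comul) (Coalgebra.comul kk)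
  simp only [LinearMap.comp_apply] at step2
  have step3 := LinearMap.congr_fun (merge hπ f π)
      (LinearMap.lTensor H (Coalgebra.comul (R := k) (A := H)) (Coalgebra.comul kk))
  simp only [LinearMap.comp_apply, LinearEquiv.coe_coe] at step3
  have step4 : (TensorProduct.assoc k H H H).symm
        (LinearMap.lTensor H (Coalgebra.comul (R := k) (A := H)) (Coalgebra.comul kk)) =
      LinearMap.rTensor H Coalgebra.comul (Coalgebra.comul kk) :=
    Coalgebra.coassoc_symm_apply kk
  have step5 := LinearMap.congr_fun
      (mk2_comp_rTensor (innerMap π f) π Coalgebra.comul)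
      (Coalgebra.comul kk)
  simp only [LinearMap.comp_apply] at step5
  have hcoll : innerMap π f ∘ₗ Coalgebra.comul =
      LinearMap.mulLeft k (π h) ∘ₗ piS π := by
    apply LinearMap.ext; intro u
    rw [LinearMap.comp_apply, hf, collapse]
    simp
  calc mk2 (π ∘ₗ f) π (Coalgebra.comul kk)
      = mk2 (π ∘ₗ f) (mk2 (Emap π) π)
          (LinearMap.lTensor H Coalgebra.comul (Coalgebra.comul kk)) := by
        rw [step1, step2]
    _ = mk2 (innerMap π f) π
          (LinearMap.rTensor H Coalgebra.comul (Coalgebra.comul kk)) := by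
        rw [step3, step4]
    _ = mk2 (innerMap π f ∘ₗ Coalgebra.comul) π (Coalgebra.comul kk) := step5.symm
    _ = π h * mk2 (piS π) π (Coalgebra.comul kk) := by
        rw [hcoll, mk2_mulLeft]
        simp

/-- PR5: `Σ π(S kk₁) π(kk₂) π(g) = Σ π(S kk₁) π(kk₂ g)`. -/
lemma pr5 (hπ : IsPartialRep k π) (g kk : H) :
    mk2 (piS π) π (Coalgebra.comul kk) * π g =
      mk2 (piS π) (π ∘ₗ LinearMap.mulRight k g) (Coalgebra.comul kk) := by
  have step0 : mk2 (piS π) π (Coalgebra.comul kk) * π g =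
      mk2 (piS π) (LinearMap.mulRight k (π g) ∘ₗ π) (Coalgebra.comul kk) := by
    rw [mk2_mulRight]; simp
  have hc2 : LinearMap.mulRight k (π g) ∘ₗ π =
      mk2 (Emap π) (π ∘ₗ LinearMap.mulRight k g) ∘ₗ Coalgebra.comul := by
    apply LinearMap.ext; intro m
    rw [LinearMap.comp_apply, LinearMap.comp_apply, c2 hπ g m]
    simp
  have step2 := LinearMap.congr_fun
      (mk2_comp_lTensor (piS π) (mk2 (Emap π) (π ∘ₗ LinearMap.mulRight k g))
        Coalgebra.comul) (Coalgebra.comul kk)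
  simp only [LinearMap.comp_apply] at step2
  have hpiS : piS π = π ∘ₗ (HopfAlgebra.antipode k : H →ₗ[k] H) := rfl
  have step3 := LinearMap.congr_fun
      (merge hπ (HopfAlgebra.antipode k : H →ₗ[k] H) (π ∘ₗ LinearMap.mulRight k g))
      (LinearMap.lTensor H (Coalgebra.comul (R := k) (A := H)) (Coalgebra.comul kk))
  simp only [LinearMap.comp_apply, LinearEquiv.coe_coe] at step3
  have step4 : (TensorProduct.assoc k H H H).symm
        (LinearMap.lTensor H (Coalgebra.comul (R := k) (A := H)) (Coalgebra.comul kk)) =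
      LinearMap.rTensor H Coalgebra.comul (Coalgebra.comul kk) :=
    Coalgebra.coassoc_symm_apply kk
  have step5 := LinearMap.congr_fun
      (mk2_comp_rTensor (innerMap π (HopfAlgebra.antipode k : H →ₗ[k] H))
        (π ∘ₗ LinearMap.mulRight k g) Coalgebra.comul) (Coalgebra.comul kk)
  simp only [LinearMap.comp_apply] at step5
  have hcoll : innerMap π (HopfAlgebra.antipode k : H →ₗ[k] H) ∘ₗ Coalgebra.comul =
      piS π := by
    apply LinearMap.ext; intro u
    have hSid : (HopfAlgebra.antipode k : H →ₗ[k] H) =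
        LinearMap.mulLeft k (1 : H) ∘ₗ (HopfAlgebra.antipode k : H →ₗ[k] H) := by
      rw [LinearMap.mulLeft_one, LinearMap.id_comp]
    rw [LinearMap.comp_apply, hSid, collapse, hπ.pr1, one_mul]
  calc mk2 (piS π) π (Coalgebra.comul kk) * π g
      = mk2 (piS π) (mk2 (Emap π) (π ∘ₗ LinearMap.mulRight k g))
          (LinearMap.lTensor H Coalgebra.comul (Coalgebra.comul kk)) := by
        rw [step0, hc2, step2]
    _ = mk2 (innerMap π (HopfAlgebra.antipode k : H →ₗ[k] H))
          (π ∘ₗ LinearMap.mulRight k g)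
          (LinearMap.rTensor H Coalgebra.comul (Coalgebra.comul kk)) := by
        rw [hpiS, step3, step4]
    _ = mk2 (innerMap π (HopfAlgebra.antipode k : H →ₗ[k] H) ∘ₗ Coalgebra.comul)
          (π ∘ₗ LinearMap.mulRight k g) (Coalgebra.comul kk) := step5.symm
    _ = mk2 (piS π) (π ∘ₗ LinearMap.mulRight k g) (Coalgebra.comul kk) := by
        rw [hcoll]

end Main

end PartialRepAux

open PartialRepAux MulOpposite in
lemma sweedlerCoop_op_eq {k H B : Type*} [CommRing k] [Ring H] [HopfAlgebra k H]
    [Ring B] [Algebra k B] (f g : H →ₗ[k] Bᵐᵒᵖ) (x : H) :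
    sweedlerCoop (LinearMap.mul k Bᵐᵒᵖ) f g x =
      MulOpposite.op
        (mk2 ((MulOpposite.opLinearEquiv k).symm.toLinearMap ∘ₗ g)
          ((MulOpposite.opLinearEquiv k).symm.toLinearMap ∘ₗ f)
          (Coalgebra.comul x)) := by
  have key : TensorProduct.lift ((LinearMap.mul k Bᵐᵒᵖ ∘ₗ f).compl₂ g) ∘ₗ
        (TensorProduct.comm k H H).toLinearMap =
      (MulOpposite.opLinearEquiv k).toLinearMap ∘ₗ
        mk2 ((MulOpposite.opLinearEquiv k).symm.toLinearMap ∘ₗ g)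
          ((MulOpposite.opLinearEquiv k).symm.toLinearMap ∘ₗ f) := by
    apply TensorProduct.ext'; intro a b
    simp only [LinearMap.comp_apply, LinearEquiv.coe_coe, TensorProduct.comm_tmul,
      TensorProduct.lift.tmul, mk2_tmul, LinearMap.compl₂_apply, LinearMap.mul_apply']
    rfl
  have key2 := LinearMap.congr_fun key (Coalgebra.comul x)
  simp only [LinearMap.comp_apply, LinearEquiv.coe_coe] at key2
  exact key2

/-- If `π : H → B` is a partial representation, then
`π̄ : H^opcop → B^op`, `π̄(h) = π(h)`, is a partial representation of the Hopf algebra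
`H^opcop` (opposite multiplication, coopposite comultiplication, same antipode) in the
opposite algebra `B^op`.  The three axioms (PR1)-(PR3) are stated for `π̄` with the
multiplication of `B^op`, the multiplication `h ·op g = g * h` of `H^opcop`, and the
coopposite comultiplication. -/
theorem partialRep_opcop
    {k H B : Type*} [CommRing k] [Ring H] [HopfAlgebra k H] [Ring B] [Algebra k B]
    (π : H →ₗ[k] B) (hπ : IsPartialRep k π) :
    ∀ π' : H →ₗ[k] Bᵐᵒᵖ,
      π' = (MulOpposite.opLinearEquiv k).toLinearMap ∘ₗ π →
      (π' 1 = 1) ∧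
      (∀ h kk : H,
        sweedlerCoop (LinearMap.mul k Bᵐᵒᵖ) ((LinearMap.mulLeft k (π' h)) ∘ₗ π')
          (π' ∘ₗ (HopfAlgebra.antipode k : H →ₗ[k] H)) kk =
        sweedlerCoop (LinearMap.mul k Bᵐᵒᵖ) (π' ∘ₗ LinearMap.mulRight k h)
          (π' ∘ₗ (HopfAlgebra.antipode k : H →ₗ[k] H)) kk) ∧
      (∀ h g : H,
        sweedlerCoop (LinearMap.mul k Bᵐᵒᵖ) π'
            (π' ∘ₗ (HopfAlgebra.antipode k : H →ₗ[k] H)) h * π' g =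
        sweedlerCoop (LinearMap.mul k Bᵐᵒᵖ) π'
            (π' ∘ₗ LinearMap.mulLeft k g ∘ₗ (HopfAlgebra.antipode k : H →ₗ[k] H)) h) := by
  open PartialRepAux MulOpposite in
  rintro π' rfl
  have hunop : ∀ t : H →ₗ[k] H,
      (MulOpposite.opLinearEquiv k (M := B)).symm.toLinearMap ∘ₗ
        (((MulOpposite.opLinearEquiv k).toLinearMap ∘ₗ π) ∘ₗ t) = π ∘ₗ t := by
    intro t; apply LinearMap.ext; intro x; simp
  have hunop0 : (MulOpposite.opLinearEquiv k (M := B)).symm.toLinearMap ∘ₗ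
      ((MulOpposite.opLinearEquiv k).toLinearMap ∘ₗ π) = π := by
    apply LinearMap.ext; intro x; simp
  refine ⟨by simp [hπ.pr1], ?_, ?_⟩
  · intro h kk
    rw [sweedlerCoop_op_eq, sweedlerCoop_op_eq]
    congr 1
    have hL : (MulOpposite.opLinearEquiv k (M := B)).symm.toLinearMap ∘ₗ
        (LinearMap.mulLeft k (((MulOpposite.opLinearEquiv k).toLinearMap ∘ₗ π) h) ∘ₗ
          ((MulOpposite.opLinearEquiv k).toLinearMap ∘ₗ π)) =
        LinearMap.mulRight k (π h) ∘ₗ π := by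
      apply LinearMap.ext; intro x
      simp [MulOpposite.unop_mul]
    rw [hunop, hL, hunop]
    have hmr : mk2 (π ∘ₗ (HopfAlgebra.antipode k : H →ₗ[k] H))
          (LinearMap.mulRight k (π h) ∘ₗ π) (Coalgebra.comul kk) =
        mk2 (piS π) π (Coalgebra.comul kk) * π h := by
      rw [show π ∘ₗ (HopfAlgebra.antipode k : H →ₗ[k] H) = piS π from rfl, mk2_mulRight]
      simp
    rw [hmr, pr5 hπ h kk]
    rfl
  · intro h g
    rw [sweedlerCoop_op_eq, sweedlerCoop_op_eq]
    rw [hunop, hunop0, hunop]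
    have hg : ((MulOpposite.opLinearEquiv k (M := B)).toLinearMap ∘ₗ π) g = op (π g) :=
      rfl
    rw [hg, show op (mk2 (π ∘ₗ (HopfAlgebra.antipode k : H →ₗ[k] H)) π
        (Coalgebra.comul h)) * op (π g) =
      op (π g * mk2 (π ∘ₗ (HopfAlgebra.antipode k : H →ₗ[k] H)) π (Coalgebra.comul h))
      from (MulOpposite.op_mul _ _).symm]
    congr 1
    rw [show π ∘ₗ (HopfAlgebra.antipode k : H →ₗ[k] H) = piS π from rfl,
      ← pr4 hπ g h]
end

section
/- Let ▷ : H ⊗ R → R be a symmetric left partial action of a Hopf algebra H on a generalized matrix algebra R = (iMj) such that each embedded subbimodule ι_ij(iMj) ⊆ R is H-invariant. Then for each i, the restriction ⇀_i : H ⊗ R_i → R_i, h ⇀_i r = ι_ii⁻¹(h ▷ ι_ii(r)), is a symmetric left partial action of H on the diagonal algebra R_i. -/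
open TensorProduct

section GMD

variable {k : Type*} [Field k] {n : ℕ}
variable (M : Fin n → Fin n → Type*) [∀ i j, AddCommGroup (M i j)] [∀ i j, Module k (M i j)]
variable (θ : ∀ i j l : Fin n, M i j →ₗ[k] M j l →ₗ[k] M i l)
variable (e : ∀ i, M i i)

/-- A generalized matrix datum: the bilinear products `θ i j l` are associative and
the elements `e i = η_i(1)` are units. -/
structure IsGMDatum : Prop where
  assoc : ∀ (i j l m : Fin n) (x : M i j) (y : M j l) (z : M l m),
    θ i l m (θ i j l x y) z = θ i j m x (θ j l m y z)
  one_mul : ∀ (i j : Fin n) (x : M i j), θ i i j (e i) x = x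
  mul_one : ∀ (i j : Fin n) (x : M i j), θ i j j x (e j) = x

/-- The underlying space of the generalized matrix algebra `R = ⊕_{i,j} M i j`. -/
abbrev gmaSpace := ∀ p : Fin n × Fin n, M p.1 p.2

/-- Row-column multiplication on the generalized matrix algebra. -/
def gmaMul (x y : gmaSpace M) : gmaSpace M :=
  fun p => ∑ l, θ p.1 l p.2 (x (p.1, l)) (y (l, p.2))

/-- The unit `Σ_i ι_ii (e i)` of the generalized matrix algebra. -/
noncomputable def gmaOne : gmaSpace M :=
  ∑ i, Pi.single (M := fun p : Fin n × Fin n => M p.1 p.2) (i, i) (e i)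

end GMD
/-- A symmetric left partial action of a Hopf algebra `H` on a (not necessarily
unital-typeclass) algebra `(A, mulA, oneA)`: (LPA1) `1_H·a = a`;
(LPA2) `h·(ab) = (h₍₁₎·a)(h₍₂₎·b)`;
(LPA3) `h·(g·a) = (h₍₁₎·1)(h₍₂₎g·a) = (h₍₁₎g·a)(h₍₂₎·1)`. -/
structure IsLeftPartialActionOn (k : Type*) {H A : Type*} [CommRing k] [Ring H]
    [HopfAlgebra k H] [AddCommGroup A] [Module k A]
    (mulA : A →ₗ[k] A →ₗ[k] A) (oneA : A) (act : H →ₗ[k] A →ₗ[k] A) : Prop where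
  lpa1 : ∀ a : A, act 1 a = a
  lpa2 : ∀ (h : H) (a b : A),
    act h (mulA a b) = sweedler mulA (act.flip a) (act.flip b) h
  lpa3 : ∀ (h g : H) (a : A),
    act h (act g a) =
      sweedler mulA (act.flip oneA) ((act.flip a) ∘ₗ LinearMap.mulRight k g) h
  lpa3' : ∀ (h g : H) (a : A),
    act h (act g a) =
      sweedler mulA ((act.flip a) ∘ₗ LinearMap.mulRight k g) (act.flip oneA) h

section GMA

variable {k : Type*} [Field k] {n : ℕ}
variable (M : Fin n → Fin n → Type*) [∀ i j, AddCommGroup (M i j)] [∀ i j, Module k (M i j)]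
variable (θ : ∀ i j l : Fin n, M i j →ₗ[k] M j l →ₗ[k] M i l)

/-- The multiplication of the generalized matrix algebra, as a bilinear map. -/
noncomputable def gmaMulL : gmaSpace M →ₗ[k] gmaSpace M →ₗ[k] gmaSpace M :=
  LinearMap.mk₂ k (gmaMul M θ)
    (fun x x' y => by
      funext p; simp [gmaMul, map_add, LinearMap.add_apply, Finset.sum_add_distrib])
    (fun c x y => by
      funext p; simp [gmaMul, Finset.smul_sum])
    (fun x y y' => by
      funext p; simp [gmaMul, map_add, LinearMap.add_apply, Finset.sum_add_distrib])
    (fun c x y => by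
      funext p; simp [gmaMul, Finset.smul_sum])

/-- The canonical inclusion `ι_ij : M i j → R` of a component into the generalized
matrix algebra. -/
noncomputable def gmaIncl (i j : Fin n) : M i j →ₗ[k] gmaSpace M :=
  LinearMap.single k (fun p : Fin n × Fin n => M p.1 p.2) (i, j)

variable {H : Type*} [Ring H] [HopfAlgebra k H]

/-- The restriction `π_ij(h)(m) = ι_ij⁻¹(h ▷ ι_ij(m))` of a partial action on the
generalized matrix algebra to the component `M i j`. -/
noncomputable def actRestrict (act : H →ₗ[k] gmaSpace M →ₗ[k] gmaSpace M)
    (i j : Fin n) : H →ₗ[k] M i j →ₗ[k] M i j where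
  toFun h := (LinearMap.proj (i, j)) ∘ₗ (act h) ∘ₗ (gmaIncl M i j)
  map_add' h h' := by ext m; simp
  map_smul' c h := by ext m; simp

end GMA

section AuxLemmas

variable {k : Type*} [Field k] {n : ℕ}
variable (M : Fin n → Fin n → Type*) [∀ i j, AddCommGroup (M i j)] [∀ i j, Module k (M i j)]
variable (θ : ∀ i j l : Fin n, M i j →ₗ[k] M j l →ₗ[k] M i l)

lemma gmaIncl_apply_same (i j : Fin n) (m : M i j) :
    gmaIncl (k := k) M i j m (i, j) = m := Pi.single_eq_same _ _

lemma gmaIncl_apply_ne (i j : Fin n) (m : M i j) (p : Fin n × Fin n) (hp : p ≠ (i, j)) :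
    gmaIncl (k := k) M i j m p = 0 :=
  Pi.single_eq_of_ne (M := fun p : Fin n × Fin n => M p.1 p.2) hp m

lemma gmaMul_incl_right (i : Fin n) (x : gmaSpace M) (b : M i i) :
    gmaMul M θ x (gmaIncl (k := k) M i i b) (i, i) = θ i i i (x (i, i)) b := by
  rw [gmaMul]
  rw [Finset.sum_eq_single i]
  · rw [gmaIncl_apply_same]
  · intro l _ hl
    rw [gmaIncl_apply_ne (k := k) M i i b (l, i) (by simp [hl]), map_zero]
  · intro h; exact absurd (Finset.mem_univ i) h

lemma gmaMul_incl_left (i : Fin n) (x : gmaSpace M) (b : M i i) :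
    gmaMul M θ (gmaIncl (k := k) M i i b) x (i, i) = θ i i i b (x (i, i)) := by
  rw [gmaMul]
  rw [Finset.sum_eq_single i]
  · rw [gmaIncl_apply_same]
  · intro l _ hl
    rw [gmaIncl_apply_ne (k := k) M i i b (i, l) (by simp [hl]), map_zero, LinearMap.zero_apply]
  · intro h; exact absurd (Finset.mem_univ i) h

lemma gmaMul_incl_incl (i : Fin n) (a b : M i i) :
    gmaMulL (k := k) M θ (gmaIncl (k := k) M i i a) (gmaIncl (k := k) M i i b) =
      gmaIncl (k := k) M i i (θ i i i a b) := by
  funext p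
  show gmaMul M θ _ _ p = _
  rcases eq_or_ne p (i, i) with rfl | hp
  · rw [gmaMul_incl_right, gmaIncl_apply_same, gmaIncl_apply_same]
  · rw [gmaIncl_apply_ne (k := k) M i i _ p hp, gmaMul]
    refine Finset.sum_eq_zero fun l _ => ?_
    rcases eq_or_ne (p.1, l) (i, i) with h1 | h1
    · have hl : l = i := (Prod.mk.injEq _ _ _ _ ▸ h1).2
      have hp1 : p.1 = i := (Prod.mk.injEq _ _ _ _ ▸ h1).1
      have : (l, p.2) ≠ (i, i) := by
        intro hc
        exact hp (Prod.ext hp1 ((Prod.mk.injEq _ _ _ _ ▸ hc).2))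
      rw [gmaIncl_apply_ne (k := k) M i i b _ this, map_zero]
    · rw [gmaIncl_apply_ne (k := k) M i i a _ h1, map_zero, LinearMap.zero_apply]

variable {H : Type*} [Ring H] [HopfAlgebra k H]

lemma act_incl_eq (act : H →ₗ[k] gmaSpace M →ₗ[k] gmaSpace M)
    (hinv : ∀ (i j : Fin n) (h : H) (m : M i j),
      act h (gmaIncl (k := k) M i j m) ∈ LinearMap.range (gmaIncl (k := k) M i j))
    (i j : Fin n) (h : H) (m : M i j) :
    act h (gmaIncl (k := k) M i j m) =
      gmaIncl (k := k) M i j ((act h (gmaIncl (k := k) M i j m)) (i, j)) := by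
  obtain ⟨m', hm'⟩ := hinv i j h m
  rw [← hm', gmaIncl_apply_same]

lemma sweedler_proj (i : Fin n) (f g : H →ₗ[k] gmaSpace M) (f' g' : H →ₗ[k] M i i)
    (hg : ∀ h, g h = gmaIncl (k := k) M i i (g' h))
    (hf : ∀ h, f' h = f h (i, i)) (h : H) :
    sweedler (gmaMulL M θ) f g h (i, i) = sweedler (θ i i i) f' g' h := by
  have key : (LinearMap.proj (R := k) (φ := fun p : Fin n × Fin n => M p.1 p.2) (i, i)) ∘ₗ
      TensorProduct.lift (((gmaMulL M θ) ∘ₗ f).compl₂ g)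
      = TensorProduct.lift (((θ i i i) ∘ₗ f').compl₂ g') := by
    apply TensorProduct.ext'
    intro x y
    simp only [LinearMap.comp_apply, TensorProduct.lift.tmul, LinearMap.compl₂_apply,
      LinearMap.proj_apply]
    rw [hg y, hf x]
    exact gmaMul_incl_right M θ i (f x) (g' y)
  have := congrArg (fun L => L (Coalgebra.comul (R := k) h)) key
  simpa [sweedler] using this

lemma sweedler_proj' (i : Fin n) (f g : H →ₗ[k] gmaSpace M) (f' g' : H →ₗ[k] M i i)
    (hf : ∀ h, f h = gmaIncl (k := k) M i i (f' h))
    (hg : ∀ h, g' h = g h (i, i)) (h : H) :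
    sweedler (gmaMulL M θ) f g h (i, i) = sweedler (θ i i i) f' g' h := by
  have key : (LinearMap.proj (R := k) (φ := fun p : Fin n × Fin n => M p.1 p.2) (i, i)) ∘ₗ
      TensorProduct.lift (((gmaMulL M θ) ∘ₗ f).compl₂ g)
      = TensorProduct.lift (((θ i i i) ∘ₗ f').compl₂ g') := by
    apply TensorProduct.ext'
    intro x y
    simp only [LinearMap.comp_apply, TensorProduct.lift.tmul, LinearMap.compl₂_apply,
      LinearMap.proj_apply]
    rw [hf x, hg y]
    exact gmaMul_incl_left M θ i (g y) (f' x)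
  have := congrArg (fun L => L (Coalgebra.comul (R := k) h)) key
  simpa [sweedler] using this

lemma act_gmaOne_proj (e : ∀ i, M i i) (act : H →ₗ[k] gmaSpace M →ₗ[k] gmaSpace M)
    (hinv : ∀ (i j : Fin n) (h : H) (m : M i j),
      act h (gmaIncl (k := k) M i j m) ∈ LinearMap.range (gmaIncl (k := k) M i j))
    (i : Fin n) (h : H) :
    act h (gmaOne M e) (i, i) = act h (gmaIncl (k := k) M i i (e i)) (i, i) := by
  have hzero : ∀ j ∈ Finset.univ, j ≠ i →
      act h (gmaIncl (k := k) M j j (e j)) (i, i) = 0 := by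
    intro j _ hj
    obtain ⟨m', hm'⟩ := hinv j j h (e j)
    rw [← hm']
    exact gmaIncl_apply_ne (k := k) M j j m' (i, i) (by simp [Ne.symm hj])
  have hOne : gmaOne M e = ∑ j, gmaIncl (k := k) M j j (e j) := rfl
  rw [hOne, map_sum, Finset.sum_apply,
    Finset.sum_eq_single i hzero (fun hm => absurd (Finset.mem_univ i) hm)]

end AuxLemmas

/-- If a Hopf algebra `H` acts partially on the generalized matrix
algebra `R = (M i j)` leaving each embedded subbimodule `ι_ij(M i j)` invariant, then
for each `i` the restriction `h ⇀_i r = ι_ii⁻¹(h ▷ ι_ii(r))` is a symmetric left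
partial action of `H` on the diagonal algebra `R_i = M i i`. -/
theorem gma_restriction_diagonal_isLeftPartialAction
    {k : Type*} [Field k] {n : ℕ}
    (M : Fin n → Fin n → Type*) [∀ i j, AddCommGroup (M i j)] [∀ i j, Module k (M i j)]
    (θ : ∀ i j l : Fin n, M i j →ₗ[k] M j l →ₗ[k] M i l)
    (e : ∀ i, M i i) (hd : IsGMDatum M θ e)
    {H : Type*} [Ring H] [HopfAlgebra k H]
    (act : H →ₗ[k] gmaSpace M →ₗ[k] gmaSpace M)
    (hact : IsLeftPartialActionOn k (gmaMulL M θ) (gmaOne M e) act)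
    (hinv : ∀ (i j : Fin n) (h : H) (m : M i j),
      act h (gmaIncl (k := k) M i j m) ∈ LinearMap.range (gmaIncl (k := k) M i j))
    (i : Fin n) :
    IsLeftPartialActionOn k (θ i i i) (e i) (actRestrict M act i i) := by
  set ρ := actRestrict M act i i with hρ
  have hρ_apply : ∀ (h : H) (m : M i i), ρ h m = act h (gmaIncl (k := k) M i i m) (i, i) :=
    fun h m => rfl
  constructor
  · intro a
    rw [hρ_apply, hact.lpa1, gmaIncl_apply_same]
  · intro h a b
    rw [hρ_apply, ← gmaMul_incl_incl M θ i a b, hact.lpa2]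
    exact sweedler_proj M θ i (act.flip (gmaIncl M i i a)) (act.flip (gmaIncl M i i b))
      (ρ.flip a) (ρ.flip b)
      (fun h' => act_incl_eq M act hinv i i h' b)
      (fun h' => rfl) h
  · intro h g a
    rw [hρ_apply, hρ_apply, ← act_incl_eq M act hinv i i g a, hact.lpa3]
    refine sweedler_proj M θ i (act.flip (gmaOne M e))
      ((act.flip (gmaIncl M i i a)) ∘ₗ LinearMap.mulRight k g)
      (ρ.flip (e i)) ((ρ.flip a) ∘ₗ LinearMap.mulRight k g)
      (fun h' => act_incl_eq M act hinv i i (h' * g) a)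
      (fun h' => ?_) h
    exact (act_gmaOne_proj M e act hinv i h').symm
  · intro h g a
    rw [hρ_apply, hρ_apply, ← act_incl_eq M act hinv i i g a, hact.lpa3']
    refine sweedler_proj' M θ i
      ((act.flip (gmaIncl M i i a)) ∘ₗ LinearMap.mulRight k g) (act.flip (gmaOne M e))
      ((ρ.flip a) ∘ₗ LinearMap.mulRight k g) (ρ.flip (e i))
      (fun h' => act_incl_eq M act hinv i i (h' * g) a)
      (fun h' => ?_) h
    exact (act_gmaOne_proj M e act hinv i h').symm
end
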